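/- arXiv:2104.03430 — 2 statements merged into one kernel-verified Lean document; each statement's English description precedes it below -/
import Mathlib

section
/- For every real number x with 0 ≤ x < 1, the series ∑_{j=0}^∞ ((3/2)_j (1)_j / ((2)_j)^2) · x^(j+1) converges and equals -4·log((1 + √(1−x))/2). In hypergeometric notation: x · ₃F₂(1,1,3/2; 2,2; x) = −4·log((1+√(1−x))/2). -/
open Real Finset

/-- The rising factorial (Pochhammer symbol): `(a)_0 = 1`, `(a)_{n+1} = (a)_n * (a + n)`. -/
def rf (a : ℝ) : ℕ → ℝ
  | 0 => 1
  | n + 1 => rf a n * (a + n)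

/-- central binomial coefficients over `4^n`, defined recursively. -/
noncomputable def cb : ℕ → ℝ
  | 0 => 1
  | n + 1 => cb n * (2 * n + 1) / (2 * n + 2)

lemma cb_pos (n : ℕ) : 0 < cb n := by
  induction n with
  | zero => norm_num [cb]
  | succ n ih =>
    have h1 : (0:ℝ) < 2 * n + 1 := by positivity
    have h2 : (0:ℝ) < 2 * n + 2 := by positivity
    simp only [cb]
    positivity

lemma cb_anti (n : ℕ) : cb (n + 1) ≤ cb n := by
  have h := cb_pos n
  have h2 : (0:ℝ) < 2 * n + 2 := by positivity
  simp only [cb]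
  rw [div_le_iff₀ h2]
  nlinarith

lemma cb_le_one (n : ℕ) : cb n ≤ 1 := by
  induction n with
  | zero => norm_num [cb]
  | succ n ih => exact (cb_anti n).trans ih

lemma cb_one : cb 1 = 1 / 2 := by norm_num [cb]

lemma cb_le_half (n : ℕ) : cb (n + 1) ≤ 1 / 2 := by
  induction n with
  | zero => rw [cb_one]
  | succ n ih => exact (cb_anti (n+1)).trans ih

lemma summable_pow_of_abs_le_one {c : ℕ → ℝ} (hc : ∀ n, |c n| ≤ 1) {x : ℝ} (hx : |x| < 1) :
    Summable fun n => c n * x ^ n := by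
  refine Summable.of_norm_bounded (g := fun n => |x| ^ n)
    (summable_geometric_of_lt_one (abs_nonneg x) hx) fun n => ?_
  rw [Real.norm_eq_abs, abs_mul, abs_pow]
  calc |c n| * |x| ^ n ≤ 1 * |x| ^ n :=
        mul_le_mul_of_nonneg_right (hc n) (by positivity)
    _ = |x| ^ n := one_mul _

lemma summable_deriv_aux {r : ℝ} (hr0 : 0 < r) (hr : r < 1) :
    Summable fun n : ℕ => (n : ℝ) * r ^ (n - 1) := by
  have h := (summable_pow_mul_geometric_of_norm_lt_one 1
    (show ‖r‖ < 1 by rwa [Real.norm_eq_abs, abs_of_pos hr0])).mul_right r⁻¹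
  refine h.congr fun n => ?_
  cases n with
  | zero => simp
  | succ m =>
    have h2 : r ^ (m + 1) * r⁻¹ = r ^ m := by
      rw [pow_succ, mul_assoc, mul_inv_cancel₀ hr0.ne', mul_one]
    simp only [pow_one]
    rw [mul_assoc, h2]
    simp

lemma summable_deriv {c : ℕ → ℝ} (hc : ∀ n, |c n| ≤ 1) {x : ℝ} (hx : |x| < 1) :
    Summable fun n : ℕ => c n * ((n : ℝ) * x ^ (n - 1)) := by
  rcases eq_or_lt_of_le (abs_nonneg x) with h0 | h0
  · have hx0 : x = 0 := by rwa [eq_comm, abs_eq_zero] at h0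
    subst hx0
    refine (hasSum_single 1 fun b hb => ?_).summable
    match b, hb with
    | 0, _ => simp
    | (m+2), _ => simp
  · refine Summable.of_norm_bounded (g := fun n => (n : ℝ) * |x| ^ (n - 1))
      (summable_deriv_aux h0 hx) fun n => ?_
    calc ‖c n * ((n:ℝ) * x ^ (n-1))‖ = |c n| * ((n:ℝ) * |x| ^ (n-1)) := by
          rw [Real.norm_eq_abs, abs_mul, abs_mul, abs_pow, Nat.abs_cast]
      _ ≤ 1 * ((n:ℝ) * |x| ^ (n-1)) :=
          mul_le_mul_of_nonneg_right (hc n) (by positivity)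
      _ = _ := one_mul _

/-- term-by-term differentiation of a power series with bounded coefficients -/
lemma hasDerivAt_tsum_pow {c : ℕ → ℝ} (hc : ∀ n, |c n| ≤ 1) {x : ℝ} (hx : |x| < 1) :
    HasDerivAt (fun y => ∑' n, c n * y ^ n) (∑' n, c n * ((n : ℝ) * x ^ (n - 1))) x := by
  set r : ℝ := (1 + |x|) / 2 with hr
  have hr0 : 0 < r := by positivity
  have hr1 : r < 1 := by rw [hr]; linarith
  have hxr : |x| < r := by rw [hr]; linarith
  refine hasDerivAt_tsum_of_isPreconnected (α := ℕ) (F := ℝ)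
    (u := fun n => (n : ℝ) * r ^ (n - 1)) (t := Set.Ioo (-r) r)
    (g := fun n y => c n * y ^ n) (g' := fun n y => c n * ((n : ℝ) * y ^ (n - 1)))
    (y₀ := 0) (y := x) (summable_deriv_aux hr0 hr1)
    isOpen_Ioo isPreconnected_Ioo ?_ ?_ ?_ ?_ ?_
  · intro n y _
    exact (hasDerivAt_pow n y).const_mul (c n)
  · intro n y hy
    have hyr : |y| ≤ r := le_of_lt (abs_lt.2 ⟨hy.1, hy.2⟩)
    calc ‖c n * ((n:ℝ) * y ^ (n-1))‖ = |c n| * ((n:ℝ) * |y| ^ (n-1)) := by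
          rw [Real.norm_eq_abs, abs_mul, abs_mul, abs_pow, Nat.abs_cast]
      _ ≤ 1 * ((n:ℝ) * r ^ (n-1)) := by
          refine mul_le_mul (hc n) ?_ (by positivity) zero_le_one
          exact mul_le_mul_of_nonneg_left (pow_le_pow_left₀ (abs_nonneg y) hyr _) (Nat.cast_nonneg n)
      _ = (n:ℝ) * r ^ (n-1) := one_mul _
  · exact ⟨by linarith, hr0⟩
  · refine (hasSum_single 0 fun b hb => ?_).summable
    simp [zero_pow hb]
  · exact abs_lt.1 hxr

noncomputable def Hf (x : ℝ) : ℝ := ∑' n, cb n * x ^ n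

noncomputable def Df (x : ℝ) : ℝ := ∑' n, cb n * ((n : ℝ) * x ^ (n - 1))

lemma cb_abs_le (n : ℕ) : |cb n| ≤ 1 := by
  rw [abs_of_pos (cb_pos n)]; exact cb_le_one n

lemma Hf_hasDeriv {x : ℝ} (hx : |x| < 1) : HasDerivAt Hf (Df x) x :=
  hasDerivAt_tsum_pow cb_abs_le hx

lemma Hf_ode {x : ℝ} (hx : |x| < 1) : (1 - x) * Df x = Hf x / 2 := by
  have hS : HasSum (fun n => cb n * ((n : ℝ) * x ^ (n - 1))) (Df x) :=
    (summable_deriv cb_abs_le hx).hasSum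
  have hS1 : HasSum (fun n => cb (n + 1) * (((n : ℕ) + 1 : ℝ) * x ^ n)) (Df x) := by
    have h2 := (hasSum_nat_add_iff (f := fun n => cb n * ((n : ℝ) * x ^ (n - 1)))
      (g := Df x) 1).2 (by simpa using hS)
    refine h2.congr_fun fun n => by push_cast; ring_nf
  have hS2 : HasSum (fun n => cb n * (n : ℝ) * x ^ n) (x * Df x) := by
    refine (hS.mul_left x).congr_fun fun n => ?_
    cases n with
    | zero => simp
    | succ m => push_cast; rw [pow_succ]; ring
  have hS3 : HasSum (fun n => cb n * x ^ n) (Hf x) :=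
    (summable_pow_of_abs_le_one cb_abs_le hx).hasSum
  have hrec : ∀ n : ℕ, cb (n + 1) * (((n : ℕ) + 1 : ℝ) * x ^ n)
      = cb n * (n : ℝ) * x ^ n + cb n * x ^ n / 2 := by
    intro n
    have h2 : (2 * (n:ℝ) + 2) ≠ 0 := by positivity
    simp only [cb]
    field_simp
  have key : Df x = x * Df x + Hf x / 2 :=
    hS1.unique ((hS2.add (hS3.div_const 2)).congr_fun fun n => hrec n)
  linear_combination key

lemma sqrt_one_sub_hasDeriv {y : ℝ} (hy : y < 1) :
    HasDerivAt (fun z : ℝ => Real.sqrt (1 - z)) (-(1 / (2 * Real.sqrt (1 - y)))) y := by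
  have h1y : (0:ℝ) < 1 - y := by linarith
  have h0 : HasDerivAt (fun z : ℝ => 1 - z) (-1) y := by
    simpa using (hasDerivAt_id y).const_sub 1
  have := (Real.hasDerivAt_sqrt h1y.ne').comp y h0
  refine this.congr_deriv (Eq.symm ?_)
  ring

lemma Hf_sqrt {x : ℝ} (hx0 : 0 ≤ x) (hx1 : x < 1) : Hf x * Real.sqrt (1 - x) = 1 := by
  have hd : ∀ y ∈ Set.Icc (0:ℝ) x, HasDerivAt (fun z => Hf z * Real.sqrt (1 - z)) 0 y := by
    intro y hy
    have hy1 : |y| < 1 := abs_lt.2 ⟨by linarith [hy.1], by linarith [hy.2]⟩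
    have h1y : (0:ℝ) < 1 - y := by linarith [(abs_lt.1 hy1).2]
    have hupos : 0 < Real.sqrt (1 - y) := Real.sqrt_pos.2 h1y
    have hu2 : Real.sqrt (1 - y) ^ 2 = 1 - y := Real.sq_sqrt h1y.le
    have hmul := (Hf_hasDeriv hy1).mul (sqrt_one_sub_hasDeriv (by linarith))
    refine hmul.congr_deriv (Eq.symm ?_)
    have hode := Hf_ode hy1
    set u := Real.sqrt (1 - y)
    field_simp
    linear_combination (-2 * Df y) * hu2 - 2 * hode
  have h0 : Hf 0 * Real.sqrt (1 - 0) = 1 := by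
    have hone : HasSum (fun n => cb n * (0:ℝ) ^ n) (cb 0 * (0:ℝ) ^ 0) :=
      hasSum_single 0 fun b hb => by simp [zero_pow hb]
    have hH0 : Hf 0 = 1 := by
      rw [Hf, hone.tsum_eq]
      norm_num [cb]
    rw [hH0]
    norm_num
  have main := eq_of_has_deriv_right_eq (a := 0) (b := x)
    (f := fun z => Hf z * Real.sqrt (1 - z)) (f' := fun _ => (0:ℝ)) (g := fun _ => (1:ℝ))
    (fun y hy => (hd y (Set.Ico_subset_Icc_self hy)).hasDerivWithinAt)
    (fun y _ => (hasDerivAt_const y (1:ℝ)).hasDerivWithinAt)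
    (fun y hy => ((hd y hy).continuousAt).continuousWithinAt)
    continuousOn_const (by simpa using h0)
  exact main x ⟨hx0, le_rfl⟩

lemma cb_hasSum {x : ℝ} (hx0 : 0 ≤ x) (hx1 : x < 1) :
    HasSum (fun n => cb n * x ^ n) ((Real.sqrt (1 - x))⁻¹) := by
  have hx : |x| < 1 := abs_lt.2 ⟨by linarith, hx1⟩
  have h : HasSum (fun n => cb n * x ^ n) (Hf x) :=
    (summable_pow_of_abs_le_one cb_abs_le hx).hasSum
  have heq : Hf x = (Real.sqrt (1 - x))⁻¹ :=
    eq_inv_of_mul_eq_one_left (Hf_sqrt hx0 hx1)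
  rwa [heq] at h

/-- coefficients of the target series -/
noncomputable def co (n : ℕ) : ℝ := 2 * cb n / n

lemma co_abs_le (n : ℕ) : |co n| ≤ 1 := by
  cases n with
  | zero => simp [co]
  | succ m =>
    have h1 := cb_le_half m
    have h2 := cb_pos (m + 1)
    have h3 : (0:ℝ) < (m:ℝ) + 1 := by positivity
    rw [co, abs_of_nonneg (by positivity)]
    rw [div_le_one (by push_cast; positivity)]
    push_cast
    nlinarith

noncomputable def Gf (x : ℝ) : ℝ := ∑' n, co n * x ^ n

lemma Gf_hasDeriv {x : ℝ} (hx : |x| < 1) :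
    HasDerivAt Gf (∑' n, co n * ((n : ℝ) * x ^ (n - 1))) x :=
  hasDerivAt_tsum_pow co_abs_le hx

lemma deriv_series_eq {y : ℝ} (hy0 : 0 ≤ y) (hy1 : y < 1) :
    HasSum (fun n : ℕ => co n * ((n : ℝ) * y ^ (n - 1)))
      (2 / (Real.sqrt (1 - y) * (1 + Real.sqrt (1 - y)))) := by
  have h1y : (0:ℝ) < 1 - y := by linarith
  have hupos : 0 < Real.sqrt (1 - y) := Real.sqrt_pos.2 h1y
  have hu2 : Real.sqrt (1 - y) ^ 2 = 1 - y := Real.sq_sqrt h1y.le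
  set u := Real.sqrt (1 - y) with hu
  have hmain : HasSum (fun n => 2 * cb (n + 1) * y ^ n) (2 / (u * (1 + u))) := by
    rcases eq_or_lt_of_le hy0 with h0 | h0
    · have hy' : y = 0 := h0.symm
      subst hy'
      have hu1 : u = 1 := by rw [hu]; norm_num
      have hone : HasSum (fun n => 2 * cb (n + 1) * (0:ℝ) ^ n)
          (2 * cb (0 + 1) * (0:ℝ) ^ 0) :=
        hasSum_single 0 fun b hb => by simp [zero_pow hb]
      convert hone using 1
      rw [hu1, cb_one]
      norm_num
    · have h := cb_hasSum hy0 hy1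
      have h1 : HasSum (fun n => cb (n + 1) * y ^ (n + 1)) (u⁻¹ - 1) := by
        refine (hasSum_nat_add_iff (f := fun n => cb n * y ^ n) (g := u⁻¹ - 1) 1).2 ?_
        have hv : u⁻¹ - 1 + ∑ i ∈ Finset.range 1, cb i * y ^ i = u⁻¹ := by
          norm_num [cb]
        rw [hv]
        exact h
      have h2 := h1.mul_left (2 / y)
      have hune : u < 1 := by nlinarith
      have hval : (2 / y) * (u⁻¹ - 1) = 2 / (u * (1 + u)) := by
        have hy' : y = (1 - u) * (1 + u) := by nlinarith
        rw [hy']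
        have h1u : (1:ℝ) - u ≠ 0 := by nlinarith
        have h2u : (1:ℝ) + u ≠ 0 := by positivity
        field_simp
      rw [hval] at h2
      refine h2.congr_fun fun n => ?_
      rw [pow_succ]
      field_simp
  have hshift : ∀ n : ℕ, co (n + 1) * (((n + 1 : ℕ) : ℝ) * y ^ ((n + 1) - 1))
      = 2 * cb (n + 1) * y ^ n := by
    intro n
    have hne : ((n:ℝ) + 1) ≠ 0 := by positivity
    simp only [co, Nat.add_sub_cancel]
    push_cast
    field_simp
  have final := (hasSum_nat_add_iff (f := fun n => co n * ((n : ℝ) * y ^ (n - 1))) 1).1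
    (hmain.congr_fun fun n => hshift n)
  simpa [co] using final

lemma log_hasDeriv {y : ℝ} (hy1 : y < 1) :
    HasDerivAt (fun z => -4 * Real.log ((1 + Real.sqrt (1 - z)) / 2))
      (2 / (Real.sqrt (1 - y) * (1 + Real.sqrt (1 - y)))) y := by
  have h1y : (0:ℝ) < 1 - y := by linarith
  have hupos : 0 < Real.sqrt (1 - y) := Real.sqrt_pos.2 h1y
  set u := Real.sqrt (1 - y) with hu
  have hinner : HasDerivAt (fun z : ℝ => (1 + Real.sqrt (1 - z)) / 2)
      ((-(1 / (2 * u))) / 2) y := ((sqrt_one_sub_hasDeriv hy1).const_add 1).div_const 2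
  have hne : (fun z : ℝ => (1 + Real.sqrt (1 - z)) / 2) y ≠ 0 := by
    show ((1 : ℝ) + Real.sqrt (1 - y)) / 2 ≠ 0
    positivity
  have hlog := hinner.log hne
  have hfin := hlog.const_mul (-4 : ℝ)
  refine hfin.congr_deriv (Eq.symm ?_)
  beta_reduce
  rw [← hu]
  field_simp
  ring

lemma Gf_eq {x : ℝ} (hx0 : 0 ≤ x) (hx1 : x < 1) :
    Gf x = -4 * Real.log ((1 + Real.sqrt (1 - x)) / 2) := by
  have hd : ∀ y ∈ Set.Icc (0:ℝ) x,
      HasDerivAt Gf (2 / (Real.sqrt (1 - y) * (1 + Real.sqrt (1 - y)))) y := by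
    intro y hy
    have hy1 : |y| < 1 := abs_lt.2 ⟨by linarith [hy.1], by linarith [hy.2]⟩
    have h := Gf_hasDeriv hy1
    rwa [(deriv_series_eq hy.1 (by linarith [(abs_lt.1 hy1).2])).tsum_eq] at h
  have hd' : ∀ y ∈ Set.Icc (0:ℝ) x,
      HasDerivAt (fun z => -4 * Real.log ((1 + Real.sqrt (1 - z)) / 2))
        (2 / (Real.sqrt (1 - y) * (1 + Real.sqrt (1 - y)))) y :=
    fun y hy => log_hasDeriv (by linarith [hy.2])
  have h0 : Gf 0 = -4 * Real.log ((1 + Real.sqrt (1 - 0)) / 2) := by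
    have hz : (fun n => co n * (0:ℝ) ^ n) = fun _ => (0:ℝ) := by
      funext n
      cases n with
      | zero => simp [co]
      | succ m => simp
    rw [Gf, hz, tsum_zero]
    norm_num
  have main := eq_of_has_deriv_right_eq (a := 0) (b := x) (f := Gf)
    (f' := fun y => 2 / (Real.sqrt (1 - y) * (1 + Real.sqrt (1 - y))))
    (g := fun z => -4 * Real.log ((1 + Real.sqrt (1 - z)) / 2))
    (fun y hy => (hd y (Set.Ico_subset_Icc_self hy)).hasDerivWithinAt)
    (fun y hy => (hd' y (Set.Ico_subset_Icc_self hy)).hasDerivWithinAt)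
    (fun y hy => ((hd y hy).continuousAt).continuousWithinAt)
    (fun y hy => ((hd' y hy).continuousAt).continuousWithinAt)
    h0
  exact main x ⟨hx0, le_rfl⟩

lemma rf_pos {a : ℝ} (ha : 0 < a) (n : ℕ) : 0 < rf a n := by
  induction n with
  | zero => norm_num [rf]
  | succ m ih =>
    have h : (0:ℝ) < a + m := by positivity
    rw [rf]
    positivity

lemma rf_coeff (j : ℕ) : rf (3 / 2) j * rf 1 j / (rf 2 j) ^ 2 = co (j + 1) := by
  induction j with
  | zero => norm_num [rf, co, cb]
  | succ m ih =>
    have hC : (0:ℝ) < rf 2 m := rf_pos (by norm_num) m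
    have h2m : (0:ℝ) < 2 + (m:ℝ) := by positivity
    have key : co (m + 2) = co (m + 1) * ((3 / 2 + (m:ℝ)) * (1 + (m:ℝ)) / ((2 + (m:ℝ)) ^ 2)) := by
      simp only [co, cb]
      push_cast
      have h1 : ((m:ℝ) + 1) ≠ 0 := by positivity
      have h2 : ((m:ℝ) + 2) ≠ 0 := by positivity
      have h3 : (2 * ((m:ℝ) + 1) + 2) ≠ 0 := by positivity
      field_simp
      ring
    rw [show m + 1 + 1 = m + 2 from rfl, key, ← ih]
    simp only [rf]
    field_simp

theorem hypergeom_3F2_log (x : ℝ) (hx0 : 0 ≤ x) (hx1 : x < 1) :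
    HasSum (fun j : ℕ => rf (3 / 2) j * rf 1 j / (rf 2 j) ^ 2 * x ^ (j + 1))
      (-4 * Real.log ((1 + Real.sqrt (1 - x)) / 2)) := by
  have hx : |x| < 1 := abs_lt.2 ⟨by linarith, hx1⟩
  have hsum : HasSum (fun n => co n * x ^ n) (Gf x) :=
    (summable_pow_of_abs_le_one co_abs_le hx).hasSum
  have hshift : HasSum (fun j => co (j + 1) * x ^ (j + 1)) (Gf x) := by
    refine (hasSum_nat_add_iff (f := fun n => co n * x ^ n) (g := Gf x) 1).2 ?_
    have hz : Gf x + ∑ i ∈ Finset.range 1, co i * x ^ i = Gf x := by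
      simp [co]
    rw [hz]
    exact hsum
  rw [Gf_eq hx0 hx1] at hshift
  exact hshift.congr_fun fun j => by rw [rf_coeff j]
end

section
/- The limit as z → 0 (z real, z ≠ 0) of [√π · cos(πz) · Γ(z + 1/2) − sin(πz) · Γ(z)] / (2πz) equals −log 2. -/
open Real Filter

noncomputable def gAux : ℝ → ℝ := fun z =>
  (2 : ℝ) ^ (-(2 * z)) * (Real.Gamma (1 - z) / Real.Gamma (1 - 2 * z)) - 1 / Real.Gamma (1 - z)

lemma gAux_zero : gAux 0 = 0 := by
  simp [gAux, Real.Gamma_one]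

lemma gAux_hasDerivAt : HasDerivAt gAux (-(2 * Real.log 2)) 0 := by
  have hd : DifferentiableAt ℝ Real.Gamma 1 := by
    apply Real.differentiableAt_Gamma
    intro m h
    have : (0:ℝ) ≤ (m:ℝ) := m.cast_nonneg
    nlinarith
  set d := deriv Real.Gamma 1 with hdd
  have hΓ : HasDerivAt Real.Gamma d 1 := hd.hasDerivAt
  have h1 : HasDerivAt (fun z : ℝ => Real.Gamma (1 - z)) (-d) 0 := by
    have hin : HasDerivAt (fun z : ℝ => 1 - z) (-1) 0 := by
      simpa using (hasDerivAt_id (0:ℝ)).const_sub 1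
    have hΓ' : HasDerivAt Real.Gamma d ((fun z : ℝ => 1 - z) 0) := by simpa using hΓ
    have := hΓ'.comp 0 hin
    exact this.congr_deriv (by ring)
  have h2 : HasDerivAt (fun z : ℝ => Real.Gamma (1 - 2 * z)) (-(2 * d)) 0 := by
    have hin : HasDerivAt (fun z : ℝ => 1 - 2 * z) (-2) 0 := by
      simpa using ((hasDerivAt_id (0:ℝ)).const_mul 2).const_sub 1
    have hΓ' : HasDerivAt Real.Gamma d ((fun z : ℝ => 1 - 2 * z) 0) := by simpa using hΓ
    have := hΓ'.comp 0 hin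
    have e : d * (-2) = -(2 * d) := by ring
    rw [e] at this
    exact this
  have h3 : HasDerivAt (fun z : ℝ => (2:ℝ) ^ (-(2 * z))) (-(2 * Real.log 2)) 0 := by
    have hin : HasDerivAt (fun z : ℝ => -(2 * z)) (-2) 0 := by
      exact ((hasDerivAt_id (0:ℝ)).const_mul 2).neg.congr_deriv (by norm_num)
    have hout : HasDerivAt (fun x : ℝ => (2:ℝ) ^ x)
        ((2:ℝ) ^ ((fun z : ℝ => -(2 * z)) 0) * Real.log 2) ((fun z : ℝ => -(2 * z)) 0) :=
      (Real.hasStrictDerivAt_const_rpow (by norm_num : (0:ℝ) < 2) _).hasDerivAt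
    have := hout.comp 0 hin
    have e : (2:ℝ) ^ ((fun z : ℝ => -(2 * z)) 0) * Real.log 2 * (-2) = -(2 * Real.log 2) := by
      norm_num; ring
    rw [e] at this
    exact this
  have hΓ1 : Real.Gamma (1 - (0:ℝ)) = 1 := by simpa using Real.Gamma_one
  have hΓ2 : Real.Gamma (1 - 2 * (0:ℝ)) = 1 := by simpa using Real.Gamma_one
  have hq : HasDerivAt (fun z : ℝ => Real.Gamma (1 - z) / Real.Gamma (1 - 2 * z)) d 0 := by
    have := h1.div h2 (by rw [hΓ2]; norm_num)
    exact this.congr_deriv (by rw [hΓ1, hΓ2]; ring)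
  have hr : HasDerivAt (fun z : ℝ => 1 / Real.Gamma (1 - z)) d 0 := by
    have := h1.inv (by rw [hΓ1]; norm_num)
    have e : -(-d) / Real.Gamma (1 - (0:ℝ)) ^ 2 = d := by rw [hΓ1]; ring
    rw [e] at this
    rw [show (fun z : ℝ => 1 / Real.Gamma (1 - z)) = (fun z => Real.Gamma (1 - z))⁻¹ by
      funext z; simp [one_div]]
    exact this
  have hmain := (h3.mul hq).sub hr
  have e : -(2 * Real.log 2) * (Real.Gamma (1 - (0:ℝ)) / Real.Gamma (1 - 2 * (0:ℝ)))
      + (2:ℝ) ^ (-(2 * (0:ℝ))) * d - d = -(2 * Real.log 2) := by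
    rw [hΓ1, hΓ2]; norm_num
  rw [e] at hmain
  exact hmain

theorem limit_removable_singularity :
    Tendsto
      (fun z : ℝ =>
        (Real.sqrt Real.pi * Real.cos (Real.pi * z) * Real.Gamma (z + 1 / 2)
            - Real.sin (Real.pi * z) * Real.Gamma z) / (2 * Real.pi * z))
      (nhdsWithin 0 {(0 : ℝ)}ᶜ) (nhds (-Real.log 2)) := by
  have hslope : Tendsto (slope gAux 0) (nhdsWithin 0 {(0:ℝ)}ᶜ) (nhds (-(2 * Real.log 2))) :=
    hasDerivAt_iff_tendsto_slope.mp gAux_hasDerivAt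
  have htend : Tendsto (fun z => slope gAux 0 z / 2) (nhdsWithin 0 {(0:ℝ)}ᶜ)
      (nhds (-Real.log 2)) := by
    have h := hslope.div_const 2
    have e : -(2 * Real.log 2) / 2 = -Real.log 2 := by ring
    rwa [e] at h
  refine htend.congr' ?_
  have hmem : Set.Ioo (-(1/2) : ℝ) (1/2) ∈ nhdsWithin (0:ℝ) {(0:ℝ)}ᶜ :=
    nhdsWithin_le_nhds (Ioo_mem_nhds (by norm_num) (by norm_num))
  filter_upwards [hmem, self_mem_nhdsWithin] with z hz hz0
  have hz0' : z ≠ 0 := hz0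
  have hz1 : -(1/2) < z := hz.1
  have hz2 : z < 1/2 := hz.2
  set s := Real.sin (Real.pi * z) with hs_def
  set co := Real.cos (Real.pi * z) with hco_def
  set A := Real.Gamma (1 - z) with hA_def
  set C := Real.Gamma (1 - 2 * z) with hC_def
  set t := (2:ℝ) ^ (-(2 * z)) with ht_def
  have hs : s ≠ 0 := by
    intro h
    rw [hs_def] at h
    rcases Real.sin_eq_zero_iff.mp h with ⟨n, hn⟩
    have hnz : (n : ℝ) = z := by
      apply mul_right_cancel₀ Real.pi_ne_zero
      linear_combination hn
    rcases lt_trichotomy n 0 with h' | h' | h'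
    · have h1 : (n:ℝ) ≤ -1 := by exact_mod_cast (by omega : n ≤ -1)
      rw [hnz] at h1; linarith
    · exact hz0' (by rw [← hnz, h']; norm_num)
    · have h1 : (1:ℝ) ≤ (n:ℝ) := by exact_mod_cast h'
      rw [hnz] at h1; linarith
  have hco : 0 < co := by
    rw [hco_def]
    apply Real.cos_pos_of_mem_Ioo
    constructor
    · nlinarith [Real.pi_pos]
    · nlinarith [Real.pi_pos]
  have hnotint : ∀ m : ℕ, z ≠ -(m:ℝ) := by
    intro m h
    rcases Nat.eq_zero_or_pos m with hm | hm
    · exact hz0' (by simp [h, hm])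
    · have : (1:ℝ) ≤ (m:ℝ) := by exact_mod_cast hm
      rw [h] at hz1; linarith
  have hnotint2 : ∀ m : ℕ, 2 * z ≠ -(m:ℝ) := by
    intro m h
    rcases Nat.eq_zero_or_pos m with hm | hm
    · apply hz0'
      rw [hm] at h; push_cast at h; linarith
    · have h1 : (1:ℝ) ≤ (m:ℝ) := by exact_mod_cast hm
      have h2 : -1 < 2 * z := by linarith
      rw [h] at h2; linarith
  have hΓz : Real.Gamma z ≠ 0 := Real.Gamma_ne_zero hnotint
  have hΓ2z : Real.Gamma (2 * z) ≠ 0 := Real.Gamma_ne_zero hnotint2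
  have hA : 0 < A := Real.Gamma_pos_of_pos (by linarith)
  have hC : 0 < C := Real.Gamma_pos_of_pos (by linarith)
  have hππ : Real.sqrt Real.pi * Real.sqrt Real.pi = Real.pi :=
    Real.mul_self_sqrt Real.pi_pos.le
  have hR1' : Real.Gamma z * A * s = Real.pi :=
    (eq_div_iff hs).mp (Real.Gamma_mul_Gamma_one_sub z)
  have hR2' : Real.Gamma (2 * z) * C * (2 * s * co) = Real.pi := by
    have R2 := Real.Gamma_mul_Gamma_one_sub (2 * z)
    have hsin2 : Real.sin (Real.pi * (2 * z)) = 2 * s * co := by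
      rw [hs_def, hco_def, show Real.pi * (2 * z) = 2 * (Real.pi * z) by ring,
        Real.sin_two_mul]
    rw [hsin2] at R2
    exact (eq_div_iff (by positivity)).mp R2
  have D' : Real.Gamma z * Real.Gamma (z + 1 / 2)
      = Real.Gamma (2 * z) * (2 * t) * Real.sqrt Real.pi := by
    have D := Real.Gamma_mul_Gamma_add_half z
    have hpow : (2:ℝ) ^ (1 - 2 * z) = 2 * t := by
      rw [ht_def, show (1 : ℝ) - 2 * z = 1 + -(2*z) by ring,
        Real.rpow_add (by norm_num), Real.rpow_one]
    rw [hpow] at D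
    exact D
  have e2 : Real.sqrt Real.pi * co * Real.Gamma (z + 1 / 2) * C = Real.pi * t * A := by
    apply mul_left_cancel₀ (mul_ne_zero hΓz hs)
    linear_combination (s * Real.sqrt Real.pi * co * C) * D'
      + (2 * t * s * co * C * Real.Gamma (2 * z)) * hππ
      + (Real.pi * t) * hR2' + (-(Real.pi * t)) * hR1'
  have key : Real.sqrt Real.pi * co * Real.Gamma (z + 1 / 2) - s * Real.Gamma z
      = Real.pi * gAux z := by
    rw [gAux]
    have e2f : Real.sqrt Real.pi * co * Real.Gamma (z + 1 / 2) = Real.pi * t * A / C := by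
      rw [eq_div_iff hC.ne']; exact e2
    have e1f : s * Real.Gamma z = Real.pi / A := by
      rw [eq_div_iff hA.ne']; linear_combination hR1'
    rw [e2f, e1f]
    simp only [← hA_def, ← hC_def, ← ht_def]
    field_simp
  rw [slope_def_field, gAux_zero, key]
  field_simp
  ring
end
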